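/- arXiv:1708.00883 — 2 statements merged into one kernel-verified Lean document; each statement's English description precedes it below -/
import Mathlib

section
/- Every partially symmetric tripartite graph G is degree symmetric: if for every edge (v_{i,j,k}, v_{s,u,v}) with i≠s the pair (v_{s,j,k}, v_{i,u,v}) is also an edge of G, then each vertex has the same degree in G and in the GTPT graph G'. -/
open Matrix

/-- The graph theoretical partial transpose (GTPT) of a tripartite graph on
`Fin m × Fin n × Fin q`: each edge `(v_{i,j,k}, v_{s,u,v})` with `i ≠ s` is replaced by
`(v_{s,j,k}, v_{i,u,v})`, and all other edges are kept. Its adjacency matrix is the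
partial transpose (in the first factor) of that of `G`. -/
def gtpt {m n q : ℕ} (G : SimpleGraph (Fin m × Fin n × Fin q)) :
    SimpleGraph (Fin m × Fin n × Fin q) where
  Adj x y := G.Adj (y.1, x.2) (x.1, y.2)
  symm := ⟨fun _ _ h => G.adj_symm h⟩
  loopless := ⟨fun _ h => G.irrefl h⟩

instance {m n q : ℕ} (G : SimpleGraph (Fin m × Fin n × Fin q)) [DecidableRel G.Adj] :
    DecidableRel (gtpt G).Adj :=
  fun x y => inferInstanceAs (Decidable (G.Adj (y.1, x.2) (x.1, y.2)))

/-- Partial transpose with respect to the first tensor factor. -/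
def partialTransposeA {α β R : Type*} (ρ : Matrix (α × β) (α × β) R) :
    Matrix (α × β) (α × β) R :=
  Matrix.of fun x y => ρ (y.1, x.2) (x.1, y.2)

/-- Every partially symmetric tripartite graph is degree symmetric: if for every edge
`(v_{i,j,k}, v_{s,u,v})` with `i ≠ s` the pair `(v_{s,j,k}, v_{i,u,v})` is also an edge,
then every vertex has the same degree in `G` and in the GTPT graph `G'`. -/
theorem degree_symmetric_of_partially_symmetric {m n q : ℕ}
    (G : SimpleGraph (Fin m × Fin n × Fin q)) [DecidableRel G.Adj]
    (hps : ∀ (i s : Fin m) (a b : Fin n × Fin q),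
      i ≠ s → G.Adj (i, a) (s, b) → G.Adj (s, a) (i, b)) :
    ∀ v, G.degree v = (gtpt G).degree v := by
  rintro ⟨i, a⟩
  unfold SimpleGraph.degree
  congr 1
  ext ⟨s, b⟩
  simp only [SimpleGraph.mem_neighborFinset]
  simp only [gtpt]
  by_cases h : i = s
  · subst h; rfl
  · exact ⟨hps i s a b h, hps s i a b (Ne.symm h)⟩
end

section
/- If a multipartite graph G on N_1⋯N_n vertices is degree symmetric under GTPT with resulting graph G', then full separability of ρ_l(G) on H_1 ⊗ ⋯ ⊗ H_n implies full separability of ρ_l(G'). -/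
open Matrix
open scoped ComplexOrder

/-- The graph theoretical partial transpose (GTPT) of a multipartite graph whose
vertices `v_{i_1,…,i_n}` are functions `x` with `x j : Fin (N j)`: each edge `(x, y)` with
`x 0 ≠ y 0` is replaced by the edge obtained from exchanging the first coordinates of the
endpoints, and all other edges are kept. -/
def gtptN {k : ℕ} {N : Fin (k + 1) → ℕ}
    (G : SimpleGraph (∀ j : Fin (k + 1), Fin (N j))) :
    SimpleGraph (∀ j : Fin (k + 1), Fin (N j)) where
  Adj x y := G.Adj (Function.update x 0 (y 0)) (Function.update y 0 (x 0))
  symm := ⟨fun _ _ h => G.symm.symm _ _ h⟩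
  loopless := ⟨fun x h => G.loopless.irrefl x (by simpa [Function.update_eq_self] using h)⟩

instance {k : ℕ} {N : Fin (k + 1) → ℕ} (G : SimpleGraph (∀ j : Fin (k + 1), Fin (N j)))
    [DecidableRel G.Adj] : DecidableRel (gtptN G).Adj :=
  fun _ _ => inferInstanceAs (Decidable (G.Adj _ _))

/-- A density matrix: positive semidefinite with unit trace. -/
def IsDensity {d : Type*} [Fintype d] [DecidableEq d] (ρ : Matrix d d ℂ) : Prop :=
  ρ.PosSemidef ∧ ρ.trace = 1

/-- Full separability of a multipartite matrix on `ℂ^{N 0} ⊗ ⋯ ⊗ ℂ^{N k}`: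
`ρ = ∑ i, q_i ρ_i^1 ⊗ ⋯ ⊗ ρ_i^n` with `q` a probability distribution and each `ρ_i^j` a
density matrix. -/
def FullySepN {k : ℕ} {N : Fin (k + 1) → ℕ}
    (ρ : Matrix (∀ j : Fin (k + 1), Fin (N j)) (∀ j : Fin (k + 1), Fin (N j)) ℂ) : Prop :=
  ∃ (t : ℕ) (p : Fin t → ℝ)
    (F : Fin t → ∀ j : Fin (k + 1), Matrix (Fin (N j)) (Fin (N j)) ℂ),
    (∀ i, 0 ≤ p i) ∧ (∑ i, p i = 1) ∧
    (∀ i j, IsDensity (F i j)) ∧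
    ρ = ∑ i, (p i : ℂ) • Matrix.of (fun x y => ∏ j, F i j (x j) (y j))

/-- The Laplacian density matrix `ρ_l(G) = L(G) / tr(L(G))` (over `ℂ`). -/
noncomputable def rhoLap {k : ℕ} {N : Fin (k + 1) → ℕ}
    (G : SimpleGraph (∀ j : Fin (k + 1), Fin (N j))) [DecidableRel G.Adj] :
    Matrix (∀ j : Fin (k + 1), Fin (N j)) (∀ j : Fin (k + 1), Fin (N j)) ℂ :=
  ((G.lapMatrix ℂ).trace)⁻¹ • G.lapMatrix ℂ


def ptN {k : ℕ} {N : Fin (k + 1) → ℕ}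
    (ρ : Matrix (∀ j : Fin (k + 1), Fin (N j)) (∀ j : Fin (k + 1), Fin (N j)) ℂ) :
    Matrix (∀ j : Fin (k + 1), Fin (N j)) (∀ j : Fin (k + 1), Fin (N j)) ℂ :=
  Matrix.of fun x y => ρ (Function.update x 0 (y 0)) (Function.update y 0 (x 0))

lemma update_eq_update_iff {k : ℕ} {N : Fin (k + 1) → ℕ}
    (x y : ∀ j : Fin (k + 1), Fin (N j)) :
    Function.update x 0 (y 0) = Function.update y 0 (x 0) ↔ x = y := by
  constructor
  · intro h
    funext j
    by_cases hj : j = 0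
    · subst hj
      have := congrFun h 0
      simpa using this.symm
    · have := congrFun h j
      simpa [Function.update_of_ne hj] using this
  · rintro rfl; rfl

lemma ptN_trace {k : ℕ} {N : Fin (k + 1) → ℕ}
    (ρ : Matrix (∀ j : Fin (k + 1), Fin (N j)) (∀ j : Fin (k + 1), Fin (N j)) ℂ) :
    (ptN ρ).trace = ρ.trace := by
  unfold ptN Matrix.trace
  simp [Matrix.diag, Function.update_eq_self]

lemma lap_gtptN {k : ℕ} {N : Fin (k + 1) → ℕ}
    (G : SimpleGraph (∀ j : Fin (k + 1), Fin (N j))) [DecidableRel G.Adj]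
    (hdeg : ∀ v, G.degree v = (gtptN G).degree v) :
    (gtptN G).lapMatrix ℂ = ptN (G.lapMatrix ℂ) := by
  ext x y
  simp only [SimpleGraph.lapMatrix, SimpleGraph.degMatrix, ptN, Matrix.sub_apply,
    Matrix.diagonal_apply, Matrix.of_apply, SimpleGraph.adjMatrix_apply]
  by_cases hxy : x = y
  · subst hxy
    rw [Function.update_eq_self]
    simp [← hdeg x]
  · rw [if_neg hxy, if_neg (fun h => hxy ((update_eq_update_iff x y).mp h))]
    rfl

/-- If a multipartite graph `G` is degree symmetric under GTPT with resulting graph `G'`,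
then full separability of `ρ_l(G)` implies full separability of `ρ_l(G')`. -/
theorem fullySep_of_degreeSymmetric_multipartite {k : ℕ} {N : Fin (k + 1) → ℕ}
    (G : SimpleGraph (∀ j : Fin (k + 1), Fin (N j))) [DecidableRel G.Adj]
    (hdeg : ∀ v, G.degree v = (gtptN G).degree v)
    (hsep : FullySepN (rhoLap G)) :
    FullySepN (rhoLap (gtptN G)) := by
  obtain ⟨t, p, F, hp0, hp1, hdens, hρ⟩ := hsep
  refine ⟨t, p, fun i => Function.update (F i) 0 (F i 0)ᵀ, hp0, hp1, ?_, ?_⟩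
  · intro i j
    by_cases hj : j = 0
    · subst hj
      simp only [Function.update_self]
      exact ⟨(hdens i 0).1.transpose, by rw [Matrix.trace_transpose]; exact (hdens i 0).2⟩
    · simpa only [Function.update_of_ne hj] using hdens i j
  · have hL : rhoLap (gtptN G) = ptN (rhoLap G) := by
      unfold rhoLap
      rw [lap_gtptN G hdeg, ptN_trace]
      ext x y; simp [ptN]
    rw [hL, hρ]
    ext x y
    simp only [ptN, Matrix.of_apply, Matrix.sum_apply, Matrix.smul_apply, smul_eq_mul]
    congr 1; funext i; congr 1
    rw [← Finset.mul_prod_erase Finset.univ _ (Finset.mem_univ (0 : Fin (k+1))),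
        ← Finset.mul_prod_erase Finset.univ _ (Finset.mem_univ (0 : Fin (k+1)))]
    refine congrArg₂ (· * ·) ?_ ?_
    · simp
    · apply Finset.prod_congr rfl
      intro j hj
      have hj0 : j ≠ 0 := (Finset.mem_erase.mp hj).1
      rw [Function.update_of_ne hj0, Function.update_of_ne hj0, Function.update_of_ne hj0]
end
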